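/- Every symmetric 2-(v,k,λ) design of order q = k−λ ≥ 2 admits a semi-resolving set for its points of size ⌈v·log v/(k−λ)⌉, i.e., a set S of this many blocks such that every pair of distinct points is separated by some block of S containing exactly one of them. -/

import Mathlib

set_option maxHeartbeats 1000000

open Finset

lemma sum_card_filter' {α β : Type*} (B : Finset α) (T : Finset β)
    (P : α → β → Prop) [∀ a b, Decidable (P a b)] :
    ∑ a ∈ B, (T.filter (P a)).card = ∑ b ∈ T, (B.filter (fun a => P a b)).card := by
  simp only [Finset.card_filter]
  exact Finset.sum_comm

lemma exp_bound' (q : ℕ) (hq : 2 ≤ q) : ((q^2 + q + 1 : ℕ) : ℝ) ≤ Real.exp q := by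
  induction q, hq using Nat.le_induction with
  | base =>
    have h := Real.exp_one_gt_d9
    have h2 : Real.exp 2 = Real.exp 1 * Real.exp 1 := by
      rw [← Real.exp_add]; norm_num
    push_cast
    nlinarith
  | succ n hn ih =>
    have h := Real.exp_one_gt_d9
    have hexp : Real.exp ((n:ℝ)+1) = Real.exp n * Real.exp 1 := by
      rw [← Real.exp_add]
    have hn' : (2:ℝ) ≤ (n:ℝ) := by exact_mod_cast hn
    have hpos : (0:ℝ) < Real.exp n := Real.exp_pos _
    push_cast at ih ⊢
    rw [hexp]
    nlinarith

theorem stmt_8 {X : Type*} [Fintype X] [DecidableEq X]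
    (v k lam q : ℕ) (B : Finset (Finset X))
    (hv : Fintype.card X = v) (hBcard : B.card = v)
    (hblocksize : ∀ C ∈ B, C.card = k)
    (hpair : ∀ x y : X, x ≠ y → (B.filter (fun C => x ∈ C ∧ y ∈ C)).card = lam)
    (hblockpair : ∀ C ∈ B, ∀ D ∈ B, C ≠ D → (C ∩ D).card = lam)
    (hpoint : ∀ x : X, (B.filter (fun C => x ∈ C)).card = k)
    (horder : k = lam + q) (hq : 2 ≤ q) :
    ∃ S ⊆ B, S.card = ⌈((v : ℝ) * Real.log v) / ((k : ℝ) - lam)⌉₊ ∧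
      ∀ x y : X, x ≠ y → ∃ C ∈ S, Xor' (x ∈ C) (y ∈ C) := by
  classical
  have hkq : ((k:ℝ) - (lam:ℝ)) = (q:ℝ) := by rw [horder]; push_cast; ring
  rcases Nat.lt_or_ge v 2 with hv2 | hv2
  · -- trivial cases v ≤ 1
    refine ⟨∅, Finset.empty_subset _, ?_, ?_⟩
    · rw [hkq]
      interval_cases v
      · simp
      · simp
    · intro x y hxy
      have hx1 : Fintype.card X ≤ 1 := by omega
      exact absurd (Fintype.card_le_one_iff.mp hx1 x y) hxy
  · -- main case v ≥ 2
    have hv0 : (0:ℝ) < v := by positivity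
    have hv1R : (1:ℝ) < v := by exact_mod_cast hv2
    have hq0 : (0:ℝ) < q := by positivity
    have hBne : B.Nonempty := Finset.card_pos.mp (by omega)
    -- k ≤ v
    have hkv' : k ≤ v := by
      obtain ⟨C0, hC0⟩ := hBne
      calc k = C0.card := (hblocksize C0 hC0).symm
        _ ≤ Fintype.card X := Finset.card_le_univ C0
        _ = v := hv
    -- k < v
    have hkv : k < v := by
      rcases Nat.lt_or_ge k v with h | h
      · exact h
      · exfalso
        have hkv2 : k = v := le_antisymm hkv' h
        have hsub : B ⊆ {Finset.univ} := by
          intro C hC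
          rw [Finset.mem_singleton]
          apply Finset.eq_univ_of_card
          rw [hblocksize C hC, hkv2, hv]
        have := Finset.card_le_card hsub
        rw [hBcard, Finset.card_singleton] at this
        omega
    obtain ⟨x0, y0, hx0y0⟩ := Fintype.exists_pair_of_one_lt_card (by omega : 1 < Fintype.card X)
    -- L1 : (v-1) * lam = k * (k-1)
    have hL1 : (v - 1) * lam = k * (k - 1) := by
      have key := sum_card_filter' (B.filter (fun C => x0 ∈ C)) (univ.erase x0)
        (fun C y => y ∈ C)
      have hL : ∑ C ∈ B.filter (fun C => x0 ∈ C),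
          ((univ.erase x0).filter (fun y => y ∈ C)).card = k * (k - 1) := by
        rw [Finset.sum_congr rfl (fun C hC => ?_), Finset.sum_const, smul_eq_mul, hpoint x0]
        · have hx0C : x0 ∈ C := (Finset.mem_filter.mp hC).2
          have hCB : C ∈ B := (Finset.mem_filter.mp hC).1
          have heq : (univ.erase x0).filter (fun y => y ∈ C) = C.erase x0 := by
            ext z
            simp [Finset.mem_erase, and_comm]
          rw [heq, Finset.card_erase_of_mem hx0C, hblocksize C hCB]
      have hR : ∑ y ∈ univ.erase x0,
          ((B.filter (fun C => x0 ∈ C)).filter (fun C => y ∈ C)).card = (v - 1) * lam := by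
        rw [Finset.sum_congr rfl (fun y hy => ?_), Finset.sum_const, smul_eq_mul,
          Finset.card_erase_of_mem (Finset.mem_univ _), Finset.card_univ, hv]
        · rw [Finset.filter_filter]
          exact hpair x0 y (fun h => (Finset.mem_erase.mp hy).1 h.symm)
      rw [hL, hR] at key
      exact key.symm
    -- L2
    have hL2 : ∀ x y : X, x ≠ y →
        (B.filter (fun C => x ∉ C ∧ y ∉ C)).card + 2 * k = v + lam := by
      intro x y hxy
      have h1 : (B.filter (fun C => x ∈ C ∨ y ∈ C)).card
          + (B.filter (fun C => ¬(x ∈ C ∨ y ∈ C))).card = v := by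
        rw [Finset.card_filter_add_card_filter_not, hBcard]
      have h2 : (B.filter (fun C => x ∈ C ∨ y ∈ C)).card + lam = 2 * k := by
        have hu := Finset.card_union_add_card_inter (B.filter (fun C => x ∈ C))
          (B.filter (fun C => y ∈ C))
        rw [← Finset.filter_or, ← Finset.filter_and, hpair x y hxy, hpoint x, hpoint y] at hu
        omega
      have h3 : B.filter (fun C => ¬(x ∈ C ∨ y ∈ C)) = B.filter (fun C => x ∉ C ∧ y ∉ C) := by
        apply Finset.filter_congr; intro C _; simp [not_or]
      rw [h3] at h1
      omega
    -- L3
    have hL3 : (v - k) * (v - 1 - k) + (v - 1) * (2 * k) = (v - 1) * (v + lam) := by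
      have hA'card : (B.filter (fun C => x0 ∉ C)).card = v - k := by
        have h := Finset.card_filter_add_card_filter_not (s := B) (p := fun C => x0 ∈ C)
        rw [hpoint x0, hBcard] at h
        omega
      have key := sum_card_filter' (B.filter (fun C => x0 ∉ C)) (univ.erase x0)
        (fun C y => y ∉ C)
      have hL : ∑ C ∈ B.filter (fun C => x0 ∉ C),
          ((univ.erase x0).filter (fun y => y ∉ C)).card = (v - k) * (v - 1 - k) := by
        rw [Finset.sum_congr rfl (fun C hC => ?_), Finset.sum_const, smul_eq_mul, hA'card]
        · have hx0C : x0 ∉ C := (Finset.mem_filter.mp hC).2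
          have hCB : C ∈ B := (Finset.mem_filter.mp hC).1
          have hsub : C ⊆ univ.erase x0 := fun z hz =>
            Finset.mem_erase.mpr ⟨fun h => hx0C (h ▸ hz), Finset.mem_univ _⟩
          have heq : (univ.erase x0).filter (fun y => y ∉ C) = (univ.erase x0) \ C := by
            ext z; simp [Finset.mem_sdiff]
          rw [heq, Finset.card_sdiff_of_subset hsub, Finset.card_erase_of_mem (Finset.mem_univ _),
            Finset.card_univ, hv, hblocksize C hCB]
      have hR : ∑ y ∈ univ.erase x0,
          ((B.filter (fun C => x0 ∉ C)).filter (fun C => y ∉ C)).card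
          + (v - 1) * (2 * k) = (v - 1) * (v + lam) := by
        have hall : ∀ y ∈ univ.erase x0,
            ((B.filter (fun C => x0 ∉ C)).filter (fun C => y ∉ C)).card + 2 * k = v + lam := by
          intro y hy
          rw [Finset.filter_filter]
          exact hL2 x0 y (fun h => (Finset.mem_erase.mp hy).1 h.symm)
        calc ∑ y ∈ univ.erase x0, ((B.filter (fun C => x0 ∉ C)).filter (fun C => y ∉ C)).card
              + (v - 1) * (2 * k)
            = ∑ y ∈ univ.erase x0, (((B.filter (fun C => x0 ∉ C)).filter
                (fun C => y ∉ C)).card + 2 * k) := by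
              rw [Finset.sum_add_distrib, Finset.sum_const, smul_eq_mul,
                Finset.card_erase_of_mem (Finset.mem_univ _), Finset.card_univ, hv]
          _ = ∑ _y ∈ univ.erase x0, (v + lam) := Finset.sum_congr rfl hall
          _ = (v - 1) * (v + lam) := by
              rw [Finset.sum_const, smul_eq_mul,
                Finset.card_erase_of_mem (Finset.mem_univ _), Finset.card_univ, hv]
      omega
    -- the bound v ≤ q^2 + q + 1
    have hvb : v ≤ q^2 + q + 1 := by
      set A := (B.filter (fun C => x0 ∉ C ∧ y0 ∉ C)).card with hAdef
      have hA : A + 2 * k = v + lam := hL2 x0 y0 hx0y0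
      have hlam1 : 1 ≤ lam := by
        rcases Nat.eq_zero_or_pos lam with h | h
        · subst h
          rw [Nat.mul_zero] at hL1
          rcases Nat.mul_eq_zero.mp hL1.symm with h' | h' <;> omega
        · exact h
      have h1v : 1 ≤ v := by omega
      have h1k : 1 ≤ k := by omega
      have hkv1 : k ≤ v - 1 := by omega
      zify [h1v, h1k, le_of_lt hkv, hkv1] at hL1 hL3
      have hq' : (2:ℤ) ≤ q := by exact_mod_cast hq
      have hk' : (k:ℤ) = lam + q := by exact_mod_cast horder
      have hA' : (A:ℤ) + 2*k = v + lam := by exact_mod_cast hA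
      have hv2' : (2:ℤ) ≤ v := by exact_mod_cast hv2
      have hlam1' : (1:ℤ) ≤ lam := by exact_mod_cast hlam1
      have hkv2 : (k:ℤ) < v := by exact_mod_cast hkv
      have hzero : ((v:ℤ) - k) * ((v:ℤ) - 1 - k) = ((v:ℤ) - 1) * A := by
        linear_combination hL3 - ((v:ℤ)-1) * hA'
      have hgoal : (v:ℤ) ≤ q^2 + q + 1 := by
        rcases eq_or_lt_of_le (show (0:ℤ) ≤ A by positivity) with h0 | h0
        · exfalso
          have hv1k : (v:ℤ) - 1 - k = 0 := by
            have h2 : ((v:ℤ) - k) * ((v:ℤ) - 1 - k) = 0 := by rw [hzero, ← h0]; ring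
            rcases mul_eq_zero.mp h2 with h3 | h3 <;> [linarith; linarith]
          have hv1 : (v:ℤ) = k + 1 := by linarith
          have hkl : (k:ℤ) * lam = k * (k-1) := by
            have h5 := hL1; rw [hv1] at h5; linarith [h5]
          have h6 : (lam:ℤ) = k - 1 :=
            mul_left_cancel₀ (show (k:ℤ) ≠ 0 by intro hh; rw [hh] at hk'; omega) hkl
          linarith
        · have hVbig : (k:ℤ) + q + 1 ≤ v := by linarith [hA', hk', h0]
          have h9 : (lam:ℤ) * ((lam+q)+q) ≤ ((lam:ℤ)+q) * (((lam:ℤ)+q)-1) := by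
            calc (lam:ℤ) * ((lam+q)+q) ≤ (lam:ℤ) * (v-1) :=
                  mul_le_mul_of_nonneg_left (by linarith) (by linarith)
              _ = k*(k-1) := by linarith [hL1]
              _ = ((lam:ℤ)+q)*(((lam:ℤ)+q)-1) := by rw [hk']
          have hlamle : (lam:ℤ) ≤ q^2 - q := by nlinarith [h9, hlam1']
          have e2 : (lam:ℤ)*v = ((lam:ℤ)+q)*(((lam:ℤ)+q)-1) + lam := by
            have h10 : (lam:ℤ)*v = (v-1)*lam + lam := by ring
            rw [h10, hL1, hk']
          have hprod : (0:ℤ) ≤ ((lam:ℤ)-1)*((q^2-q) - lam) :=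
            mul_nonneg (by linarith) (by linarith)
          have hfin : (lam:ℤ) * v ≤ lam * (q^2 + q + 1) := by linarith [e2, hprod]
          exact le_of_mul_le_mul_left hfin (by linarith)
      exact_mod_cast hgoal
    -- log v ≤ q
    have hlogv : Real.log v ≤ q := by
      rw [Real.log_le_iff_le_exp hv0]
      calc (v:ℝ) ≤ ((q^2 + q + 1 : ℕ) : ℝ) := by exact_mod_cast hvb
        _ ≤ Real.exp q := exp_bound' q hq
    set m := ⌈((v : ℝ) * Real.log v) / (q : ℝ)⌉₊ with hmdef
    have hm1 : 1 ≤ m := by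
      rw [hmdef]
      apply Nat.one_le_iff_ne_zero.mpr
      apply Nat.pos_iff_ne_zero.mp
      apply Nat.ceil_pos.mpr
      exact div_pos (mul_pos hv0 (Real.log_pos hv1R)) hq0
    have hmlev : m ≤ v := by
      rw [hmdef]
      apply Nat.ceil_le.mpr
      rw [div_le_iff₀ hq0]
      calc (v:ℝ) * Real.log v ≤ (v:ℝ) * q := by
            apply mul_le_mul_of_nonneg_left hlogv (le_of_lt hv0)
        _ = (v:ℝ) * q := rfl
    have hmq : (v:ℝ) * Real.log v ≤ (m:ℝ) * q := by
      have h := Nat.le_ceil (((v : ℝ) * Real.log v) / (q : ℝ))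
      rw [← hmdef] at h
      rw [div_le_iff₀ hq0] at h
      exact h
    -- K1 : each pair separated by exactly 2q blocks
    have hK1 : ∀ p : X × X, p.1 ≠ p.2 →
        (B.filter (fun C => Xor' (p.1 ∈ C) (p.2 ∈ C))).card = 2 * q := by
      intro p hp
      have ha : ∀ x y : X, x ≠ y → (B.filter (fun C => x ∈ C ∧ y ∉ C)).card = q := by
        intro x y hxy
        have h1 : ((B.filter (fun C => x ∈ C)).filter (fun C => y ∈ C)).card
            + ((B.filter (fun C => x ∈ C)).filter (fun C => ¬ y ∈ C)).card
            = (B.filter (fun C => x ∈ C)).card :=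
          Finset.card_filter_add_card_filter_not _
        rw [Finset.filter_filter, Finset.filter_filter, hpair x y hxy, hpoint x] at h1
        omega
      have hsplit : B.filter (fun C => Xor' (p.1 ∈ C) (p.2 ∈ C))
          = B.filter (fun C => p.1 ∈ C ∧ p.2 ∉ C) ∪ B.filter (fun C => p.2 ∈ C ∧ p.1 ∉ C) := by
        rw [← Finset.filter_or]
        apply Finset.filter_congr
        intro C _
        constructor
        · rintro (⟨h1, h2⟩ | ⟨h1, h2⟩)
          · exact Or.inl ⟨h1, h2⟩
          · exact Or.inr ⟨h1, h2⟩
        · rintro (⟨h1, h2⟩ | ⟨h1, h2⟩)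
          · exact Or.inl ⟨h1, h2⟩
          · exact Or.inr ⟨h1, h2⟩
      have hdisj : Disjoint (B.filter (fun C => p.1 ∈ C ∧ p.2 ∉ C))
          (B.filter (fun C => p.2 ∈ C ∧ p.1 ∉ C)) := by
        rw [Finset.disjoint_left]
        intro C hC1 hC2
        exact (Finset.mem_filter.mp hC2).2.2 (Finset.mem_filter.mp hC1).2.1
      rw [hsplit, Finset.card_union_of_disjoint hdisj, ha p.1 p.2 hp, ha p.2 p.1 hp.symm]
      omega
    -- greedy construction
    set c : ℝ := max (1 - 2*(q:ℝ)/v) 0 with hc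
    have hc0 : 0 ≤ c := le_max_right _ _
    have hcx : (2*(q:ℝ)/v) ≠ 0 := by positivity
    have hclt : c < Real.exp (-(2*(q:ℝ)/v)) := by
      apply max_lt
      · have := Real.add_one_lt_exp (x := -(2*(q:ℝ)/v)) (by simpa using hcx)
        linarith
      · exact Real.exp_pos _
    have step : ∀ U : Finset (X × X), (∀ p ∈ U, p.1 ≠ p.2) →
        ∃ C ∈ B, ((U.filter (fun p => ¬ Xor' (p.1 ∈ C) (p.2 ∈ C))).card : ℝ) ≤ c * U.card := by
      intro U hU
      have hsum : ∑ C ∈ B, (U.filter (fun p => Xor' (p.1 ∈ C) (p.2 ∈ C))).card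
          = 2 * q * U.card := by
        rw [sum_card_filter' B U (fun C p => Xor' (p.1 ∈ C) (p.2 ∈ C))]
        rw [Finset.sum_congr rfl (fun p hp => hK1 p (hU p hp)), Finset.sum_const, smul_eq_mul]
        ring
      obtain ⟨C, hCB, hC⟩ : ∃ C ∈ B, 2 * q * U.card ≤
          v * (U.filter (fun p => Xor' (p.1 ∈ C) (p.2 ∈ C))).card := by
        apply Finset.exists_le_of_sum_le hBne
        rw [Finset.sum_const, smul_eq_mul, hBcard, ← Finset.mul_sum, hsum]
      refine ⟨C, hCB, ?_⟩
      have hsplit := Finset.card_filter_add_card_filter_not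
        (s := U) (p := fun p => Xor' (p.1 ∈ C) (p.2 ∈ C))
      have hC' : 2 * (q:ℝ) * U.card
          ≤ (v:ℝ) * (U.filter (fun p => Xor' (p.1 ∈ C) (p.2 ∈ C))).card := by
        exact_mod_cast hC
      have hsplit' : ((U.filter (fun p => Xor' (p.1 ∈ C) (p.2 ∈ C))).card : ℝ)
          + ((U.filter (fun p => ¬ Xor' (p.1 ∈ C) (p.2 ∈ C))).card : ℝ) = (U.card : ℝ) := by
        exact_mod_cast hsplit
      have hge : 2 * (q:ℝ) * U.card / v
          ≤ ((U.filter (fun p => Xor' (p.1 ∈ C) (p.2 ∈ C))).card : ℝ) :=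
        (div_le_iff₀ hv0).mpr (by linarith)
      have h1 : ((U.filter (fun p => ¬ Xor' (p.1 ∈ C) (p.2 ∈ C))).card : ℝ)
          ≤ (1 - 2*(q:ℝ)/v) * U.card := by
        have heq : (1 - 2*(q:ℝ)/v) * U.card = (U.card : ℝ) - 2 * (q:ℝ) * U.card / v := by ring
        rw [heq]; linarith
      calc ((U.filter (fun p => ¬ Xor' (p.1 ∈ C) (p.2 ∈ C))).card : ℝ)
          ≤ (1 - 2*(q:ℝ)/v) * U.card := h1
        _ ≤ c * U.card := mul_le_mul_of_nonneg_right (le_max_left _ _) (by positivity)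
    have main : ∀ j : ℕ, ∃ S, S ⊆ B ∧ S.card ≤ j ∧
        (((univ.offDiag.filter (fun p : X × X => ∀ C ∈ S,
          ¬ Xor' (p.1 ∈ C) (p.2 ∈ C))).card : ℝ)) ≤ (v:ℝ)^2 * c^j := by
      intro j
      induction j with
      | zero =>
        refine ⟨∅, Finset.empty_subset _, le_refl _, ?_⟩
        have h1 : univ.offDiag.filter (fun p : X × X => ∀ C ∈ (∅ : Finset (Finset X)),
            ¬ Xor' (p.1 ∈ C) (p.2 ∈ C)) = univ.offDiag := by
          apply Finset.filter_true_of_mem; intro p _; simp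
        rw [h1, pow_zero, mul_one]
        have h2 : (univ.offDiag (α := X)).card ≤ v * v := by
          rw [Finset.offDiag_card, Finset.card_univ, hv]
          exact Nat.sub_le _ _
        calc ((univ.offDiag (α := X)).card : ℝ) ≤ ((v * v : ℕ) : ℝ) := by exact_mod_cast h2
          _ = (v:ℝ)^2 := by push_cast; ring
      | succ j ih =>
        obtain ⟨S, hSB, hScard, hBound⟩ := ih
        set U' := univ.offDiag.filter (fun p : X × X => ∀ C ∈ S,
          ¬ Xor' (p.1 ∈ C) (p.2 ∈ C)) with hU'
        have hU'sub : ∀ p ∈ U', p.1 ≠ p.2 := by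
          intro p hp
          exact (Finset.mem_offDiag.mp (Finset.mem_filter.mp hp).1).2.2
        obtain ⟨C, hCB, hC⟩ := step U' hU'sub
        refine ⟨insert C S, Finset.insert_subset hCB hSB,
          (Finset.card_insert_le _ _).trans (by omega), ?_⟩
        have hEq : univ.offDiag.filter (fun p : X × X => ∀ D ∈ insert C S,
            ¬ Xor' (p.1 ∈ D) (p.2 ∈ D)) = U'.filter (fun p => ¬ Xor' (p.1 ∈ C) (p.2 ∈ C)) := by
          rw [hU', Finset.filter_filter]
          apply Finset.filter_congr
          intro p _
          simp only [Finset.forall_mem_insert]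
          tauto
        rw [hEq]
        calc ((U'.filter (fun p => ¬ Xor' (p.1 ∈ C) (p.2 ∈ C))).card : ℝ)
            ≤ c * U'.card := hC
          _ ≤ c * ((v:ℝ)^2 * c^j) := mul_le_mul_of_nonneg_left hBound hc0
          _ = (v:ℝ)^2 * c^(j+1) := by ring
    obtain ⟨S, hSB, hScard, hBound⟩ := main m
    have hfin : (((univ.offDiag.filter (fun p : X × X => ∀ C ∈ S,
        ¬ Xor' (p.1 ∈ C) (p.2 ∈ C))).card : ℝ)) < 1 := by
      have h1 : c ^ m < Real.exp (-(2*(q:ℝ)/v)) ^ m :=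
        pow_lt_pow_left₀ hclt hc0 (by omega)
      have h2 : Real.exp (-(2*(q:ℝ)/v)) ^ m = Real.exp ((m:ℝ) * -(2*(q:ℝ)/v)) :=
        (Real.exp_nat_mul _ m).symm
      have h3 : (m:ℝ) * -(2*(q:ℝ)/v) ≤ -(2 * Real.log v) := by
        rw [show (m:ℝ) * -(2*(q:ℝ)/v) = -((m:ℝ)*(2*(q:ℝ)/v)) by ring, neg_le_neg_iff,
          show (m:ℝ)*(2*(q:ℝ)/v) = 2*((m:ℝ)*q)/v by ring, le_div_iff₀ hv0]
        nlinarith [hmq]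
      have h4 : Real.exp ((m:ℝ) * -(2*(q:ℝ)/v)) ≤ Real.exp (-(2 * Real.log v)) :=
        Real.exp_le_exp.mpr h3
      have h5 : (v:ℝ)^2 * Real.exp (-(2 * Real.log v)) = 1 := by
        rw [Real.exp_neg, show (2:ℝ) * Real.log v = Real.log v + Real.log v by ring,
          Real.exp_add, Real.exp_log hv0]
        field_simp
      calc (((univ.offDiag.filter (fun p : X × X => ∀ C ∈ S,
            ¬ Xor' (p.1 ∈ C) (p.2 ∈ C))).card : ℝ))
          ≤ (v:ℝ)^2 * c^m := hBound
        _ < (v:ℝ)^2 * Real.exp (-(2*(q:ℝ)/v)) ^ m := by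
            apply mul_lt_mul_of_pos_left h1 (by positivity)
        _ = (v:ℝ)^2 * Real.exp ((m:ℝ) * -(2*(q:ℝ)/v)) := by rw [h2]
        _ ≤ (v:ℝ)^2 * Real.exp (-(2 * Real.log v)) :=
            mul_le_mul_of_nonneg_left h4 (by positivity)
        _ = 1 := h5
    have hzero : (univ.offDiag.filter (fun p : X × X => ∀ C ∈ S,
        ¬ Xor' (p.1 ∈ C) (p.2 ∈ C))).card = 0 := by
      exact_mod_cast Nat.lt_one_iff.mp (by exact_mod_cast hfin)
    have hempty := Finset.card_eq_zero.mp hzero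
    -- pad S to exact cardinality m
    obtain ⟨T, hST, hTB, hTcard⟩ := Finset.exists_subsuperset_card_eq hSB hScard
      (show m ≤ B.card by rw [hBcard]; exact hmlev)
    refine ⟨T, hTB, ?_, ?_⟩
    · rw [hkq, hTcard, hmdef]
    · intro x y hxy
      have hp : ((x, y) : X × X) ∈ univ.offDiag :=
        Finset.mem_offDiag.mpr ⟨Finset.mem_univ _, Finset.mem_univ _, hxy⟩
      have hnp : ¬ (∀ C ∈ S, ¬ Xor' (x ∈ C) (y ∈ C)) := by
        intro hcon
        have hmem : ((x, y) : X × X) ∈ univ.offDiag.filter (fun p : X × X => ∀ C ∈ S,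
            ¬ Xor' (p.1 ∈ C) (p.2 ∈ C)) := Finset.mem_filter.mpr ⟨hp, hcon⟩
        rw [hempty] at hmem
        exact absurd hmem (Finset.notMem_empty _)
      push_neg at hnp
      obtain ⟨C, hCS, hC⟩ := hnp
      exact ⟨C, hST hCS, hC⟩
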